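/- Let (X_t, Y_t) follow the NAAR model X_t = f₁(X_{t−1}) + f₂(Y_{t−q}) + ε_t^X, Y_t = g₁(Y_{t−1}) + g₂(X_{t−q}) + ε_t^Y, where g₁, g₂, ε_t^Y are non-negative, g₂ is continuous with g₂(x) → ∞ as x → ∞, and the marginals are continuous with support containing a neighborhood of infinity. Then for every λ ∈ ℝ, lim_{v→∞} P(Y_q > λ ∣ X_0 > v) = 1; consequently Γ^{time}_{X→Y}(q) = 1. -/

import Mathlib

open MeasureTheory ProbabilityTheory Filter Set

/-- Tail probability `P(X > x)` as a real number. -/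
noncomputable def tailP {Ω : Type*} [MeasurableSpace Ω] (μ : Measure Ω) (X : Ω → ℝ) (x : ℝ) : ℝ :=
  (μ {ω | x < X ω}).toReal

/-- `L` is slowly varying: `L(αx)/L(x) → 1` as `x → ∞`, for every `α > 0`. -/
def SlowlyVarying (L : ℝ → ℝ) : Prop :=
  ∀ α : ℝ, 0 < α → Tendsto (fun x => L (α * x) / L x) atTop (nhds 1)

/-- `X` is regularly varying with tail index `θ`: `P(X > x) = x^{-θ} L(x)` with `L` slowly varying. -/
def RegVarying {Ω : Type*} [MeasurableSpace Ω] (μ : Measure Ω) (X : Ω → ℝ) (θ : ℝ) : Prop :=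
  ∃ L : ℝ → ℝ, SlowlyVarying L ∧ ∀ x : ℝ, 0 < x → tailP μ X x = x ^ (-θ) * L x

/-- Conditional probability `P(A | B)` as a real number. -/
noncomputable def condP {Ω : Type*} [MeasurableSpace Ω] (μ : Measure Ω) (A B : Set Ω) : ℝ :=
  (μ (A ∩ B)).toReal / (μ B).toReal

/-- Conditional expectation `E[g | B]` as a real number. -/
noncomputable def condE {Ω : Type*} [MeasurableSpace Ω] (μ : Measure Ω) (B : Set Ω) (g : Ω → ℝ) : ℝ :=
  (∫ ω in B, g ω ∂μ) / (μ B).toReal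

/-- Cumulative distribution function of `X`. -/
noncomputable def cdfR {Ω : Type*} [MeasurableSpace Ω] (μ : Measure Ω) (X : Ω → ℝ) (t : ℝ) : ℝ :=
  (μ {ω | X ω ≤ t}).toReal

lemma cdfR_mono {Ω : Type*} [MeasurableSpace Ω] (μ : Measure Ω) [IsFiniteMeasure μ] (X : Ω → ℝ) :
    Monotone (cdfR μ X) := by
  intro s t hst
  exact ENNReal.toReal_mono (measure_ne_top μ _)
    (measure_mono fun ω hω => le_trans hω hst)

lemma cdfR_nonneg {Ω : Type*} [MeasurableSpace Ω] (μ : Measure Ω) (X : Ω → ℝ) (t : ℝ) :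
    0 ≤ cdfR μ X t := ENNReal.toReal_nonneg

lemma cdfR_le_one {Ω : Type*} [MeasurableSpace Ω] (μ : Measure Ω) [IsProbabilityMeasure μ]
    (X : Ω → ℝ) (t : ℝ) : cdfR μ X t ≤ 1 := by
  have : μ {ω | X ω ≤ t} ≤ 1 := prob_le_one
  exact le_trans (ENNReal.toReal_mono ENNReal.one_ne_top this) (by simp)

/-- Tails of a real random variable on a probability space become small. -/
lemma tail_small {Ω : Type*} [MeasurableSpace Ω] (μ : Measure Ω) [IsProbabilityMeasure μ]
    (X : Ω → ℝ) (hX : Measurable X) (ε : ENNReal) (hε : ε ≠ 0) :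
    ∃ n : ℕ, μ {ω | (n : ℝ) < X ω} < ε := by
  have hmeas : ∀ n : ℕ, NullMeasurableSet {ω | (n : ℝ) < X ω} μ :=
    fun n => (hX measurableSet_Ioi).nullMeasurableSet
  have hanti : Antitone fun n : ℕ => {ω | (n : ℝ) < X ω} := by
    intro n m hnm ω hω
    exact lt_of_le_of_lt (show (n:ℝ) ≤ m from Nat.cast_le.mpr hnm) hω
  have hiInter : (⋂ n : ℕ, {ω | (n : ℝ) < X ω}) = (∅ : Set Ω) := by
    ext ω
    simp only [mem_iInter, mem_setOf_eq, mem_empty_iff_false, iff_false, not_forall, not_lt]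
    obtain ⟨n, hn⟩ := exists_nat_gt (X ω)
    exact ⟨n, hn.le⟩
  have htend : Tendsto (fun n : ℕ => μ {ω | (n : ℝ) < X ω}) atTop (nhds 0) := by
    have := tendsto_measure_iInter_atTop hmeas hanti ⟨0, measure_ne_top μ _⟩
    rw [hiInter] at this
    simpa [Function.comp_def] using this
  have : ∀ᶠ n : ℕ in atTop, μ {ω | (n : ℝ) < X ω} < ε :=
    htend.eventually_lt_const (pos_iff_ne_zero.mpr hε)
  exact this.exists

/-- in the NAAR model with non-negative g₁, g₂, ε^Y and g₂ continuous tending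
to ∞, extremes of the cause X₀ force extremes of the effect Y_q:
lim_{v→∞} P(Y_q > λ | X₀ > v) = 1 for every λ, hence Γ^{time}_{X→Y}(q) = 1. -/
theorem stmt_11 {Ω : Type*} [MeasurableSpace Ω] (μ : Measure Ω) [IsProbabilityMeasure μ]
    (X Y : ℤ → Ω → ℝ) (εX εY : ℤ → Ω → ℝ) (q : ℕ)
    (hXmeas : ∀ t, Measurable (X t)) (hYmeas : ∀ t, Measurable (Y t))
    (f₁ f₂ g₁ g₂ : ℝ → ℝ)
    (heqX : ∀ t ω, X t ω = f₁ (X (t - 1) ω) + f₂ (Y (t - (q : ℤ)) ω) + εX t ω)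
    (heqY : ∀ t ω, Y t ω = g₁ (Y (t - 1) ω) + g₂ (X (t - (q : ℤ)) ω) + εY t ω)
    (hg₁ : ∀ x, 0 ≤ g₁ x) (hg₂ : ∀ x, 0 ≤ g₂ x)
    (hεY : ∀ t ω, 0 ≤ εY t ω)
    (hg₂cont : Continuous g₂) (hg₂inf : Tendsto g₂ atTop atTop)
    (hXcont : ∀ c : ℝ, μ {ω | X 0 ω = c} = 0)
    (hYcont : ∀ c : ℝ, μ {ω | Y 0 ω = c} = 0)
    (hXsupp : ∀ v : ℝ, 0 < μ {ω | v < X 0 ω})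
    (hYsupp : ∀ v : ℝ, 0 < μ {ω | v < Y 0 ω})
    (hXstat : ∀ t, Measure.map (X t) μ = Measure.map (X 0) μ)
    (hYstat : ∀ t, Measure.map (Y t) μ = Measure.map (Y 0) μ) :
    (∀ l : ℝ, Tendsto (fun v => condP μ {ω | l < Y (q : ℤ) ω} {ω | v < X 0 ω})
        atTop (nhds 1)) ∧
    Tendsto (fun u => condE μ {ω | u < cdfR μ (X 0) (X 0 ω)}
        (fun ω => Finset.sup' (Finset.range (q + 1)) Finset.nonempty_range_add_one
          (fun i => cdfR μ (Y 0) (Y (i : ℤ) ω))))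
      (nhdsWithin 1 (Set.Iio 1)) (nhds 1) := by
  -- key pointwise bound: Y_q ≥ g₂(X₀)
  have hkey : ∀ ω, g₂ (X 0 ω) ≤ Y (q : ℤ) ω := by
    intro ω
    have h := heqY (q : ℤ) ω
    rw [sub_self] at h
    have h1 := hg₁ (Y ((q : ℤ) - 1) ω)
    have h2 := hεY (q : ℤ) ω
    linarith
  constructor
  · -- Part 1
    intro l
    obtain ⟨M, hM⟩ : ∃ M : ℝ, ∀ x ≥ M, l < g₂ x :=
      eventually_atTop.mp (hg₂inf.eventually (eventually_gt_atTop l))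
    have hc : ∀ᶠ v in atTop,
        condP μ {ω | l < Y (q : ℤ) ω} {ω | v < X 0 ω} = 1 := by
      filter_upwards [eventually_ge_atTop M] with v hv
      have hsub : {ω | v < X 0 ω} ⊆ {ω | l < Y (q : ℤ) ω} := by
        intro ω hω
        exact lt_of_lt_of_le (hM _ (le_trans hv (le_of_lt hω))) (hkey ω)
      have hint : {ω | l < Y (q : ℤ) ω} ∩ {ω | v < X 0 ω} = {ω | v < X 0 ω} :=
        inter_eq_self_of_subset_right hsub
      rw [condP, hint, div_self]
      exact (ENNReal.toReal_pos (hXsupp v).ne' (measure_ne_top μ _)).ne'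
    exact Tendsto.congr' (EventuallyEq.symm hc) tendsto_const_nhds
  · -- Part 2
    set F : ℝ → ℝ := cdfR μ (X 0) with hF
    set G : ℝ → ℝ := cdfR μ (Y 0) with hG
    have hFmono : Monotone F := cdfR_mono μ (X 0)
    have hGmono : Monotone G := cdfR_mono μ (Y 0)
    set gfun : Ω → ℝ := fun ω => Finset.sup' (Finset.range (q + 1))
      Finset.nonempty_range_add_one (fun i => G (Y (i : ℤ) ω)) with hgfun
    have hgmeas : Measurable gfun := by
      have : gfun = Finset.sup' (Finset.range (q + 1)) Finset.nonempty_range_add_one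
          (fun i ω => G (Y (i : ℤ) ω)) := by
        funext ω
        rw [Finset.sup'_apply]
      rw [this]
      exact Finset.measurable_sup' _ fun i _ => hGmono.measurable.comp (hYmeas (i : ℤ))
    have hg_le1 : ∀ ω, gfun ω ≤ 1 :=
      fun ω => Finset.sup'_le _ _ fun i _ => cdfR_le_one μ (Y 0) _
    have hg_nonneg : ∀ ω, 0 ≤ gfun ω := by
      intro ω
      simp only [hgfun]
      exact le_trans (cdfR_nonneg μ (Y 0) (Y ((0 : ℕ) : ℤ) ω))
        (Finset.le_sup' (fun i : ℕ => G (Y (i : ℤ) ω)) (Finset.mem_range.mpr (Nat.succ_pos q)))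
    -- measurability of conditioning sets
    have hBmeas : ∀ u : ℝ, MeasurableSet {ω | u < F (X 0 ω)} := by
      intro u
      exact (hFmono.measurable.comp (hXmeas 0)) measurableSet_Ioi
    -- the conditioning sets have positive measure for u < 1
    have hBpos : ∀ u : ℝ, u < 1 → 0 < μ {ω | u < F (X 0 ω)} := by
      intro u hu
      obtain ⟨n, hn⟩ := tail_small μ (X 0) (hXmeas 0) (ENNReal.ofReal (1 - u))
        (by simp [ENNReal.ofReal_eq_zero]; linarith)
      have htail : (μ {ω | (n : ℝ) < X 0 ω}).toReal < 1 - u := by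
        have := (ENNReal.toReal_lt_toReal (measure_ne_top μ _) ENNReal.ofReal_ne_top).mpr hn
        rwa [ENNReal.toReal_ofReal (by linarith)] at this
      have hcover : (1 : ℝ) ≤ F n + (μ {ω | (n : ℝ) < X 0 ω}).toReal := by
        have huniv : (univ : Set Ω) = {ω | X 0 ω ≤ (n : ℝ)} ∪ {ω | (n : ℝ) < X 0 ω} := by
          ext ω; simp [le_or_gt]
        have := measure_union_le (μ := μ) {ω | X 0 ω ≤ (n : ℝ)} {ω | (n : ℝ) < X 0 ω}
        rw [← huniv, measure_univ] at this
        have h2 := ENNReal.toReal_mono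
          (by exact ENNReal.add_ne_top.mpr ⟨measure_ne_top μ _, measure_ne_top μ _⟩) this
        rwa [ENNReal.toReal_one, ENNReal.toReal_add (measure_ne_top μ _) (measure_ne_top μ _)]
          at h2
      have hFn : u < F n := by linarith
      have hsub : {ω | (n : ℝ) < X 0 ω} ⊆ {ω | u < F (X 0 ω)} := by
        intro ω hω
        exact lt_of_lt_of_le hFn (hFmono (le_of_lt hω))
      exact lt_of_lt_of_le (hXsupp n) (measure_mono hsub)
    rw [Metric.tendsto_nhds]
    intro ε hε
    -- choose lam with G lam > 1 - ε/2
    obtain ⟨m, hm⟩ := tail_small μ (Y 0) (hYmeas 0) (ENNReal.ofReal (ε / 2))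
      (by simp [ENNReal.ofReal_eq_zero]; linarith)
    have hGm : 1 - ε / 2 < G (m : ℝ) := by
      have htail : (μ {ω | (m : ℝ) < Y 0 ω}).toReal < ε / 2 := by
        have := (ENNReal.toReal_lt_toReal (measure_ne_top μ _) ENNReal.ofReal_ne_top).mpr hm
        rwa [ENNReal.toReal_ofReal (by linarith)] at this
      have hcover : (1 : ℝ) ≤ G m + (μ {ω | (m : ℝ) < Y 0 ω}).toReal := by
        have huniv : (univ : Set Ω) = {ω | Y 0 ω ≤ (m : ℝ)} ∪ {ω | (m : ℝ) < Y 0 ω} := by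
          ext ω; simp [le_or_gt]
        have := measure_union_le (μ := μ) {ω | Y 0 ω ≤ (m : ℝ)} {ω | (m : ℝ) < Y 0 ω}
        rw [← huniv, measure_univ] at this
        have h2 := ENNReal.toReal_mono
          (by exact ENNReal.add_ne_top.mpr ⟨measure_ne_top μ _, measure_ne_top μ _⟩) this
        rwa [ENNReal.toReal_one, ENNReal.toReal_add (measure_ne_top μ _) (measure_ne_top μ _)]
          at h2
      linarith
    -- choose M forcing g₂ above m
    obtain ⟨M, hM⟩ : ∃ M : ℝ, ∀ x ≥ M, (m : ℝ) < g₂ x :=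
      eventually_atTop.mp (hg₂inf.eventually (eventually_gt_atTop (m : ℝ)))
    have hFM : F M < 1 := by
      have hcompl : {ω | X 0 ω ≤ M} = {ω | M < X 0 ω}ᶜ := by
        ext ω; simp [not_lt]
      have hlt : μ {ω | X 0 ω ≤ M} < 1 := by
        rw [hcompl, prob_compl_eq_one_sub (show MeasurableSet {ω | M < X 0 ω} from (hXmeas 0) measurableSet_Ioi)]
        exact ENNReal.sub_lt_self ENNReal.one_ne_top one_ne_zero (hXsupp M).ne'
      have := (ENNReal.toReal_lt_toReal (measure_ne_top μ _) ENNReal.one_ne_top).mpr hlt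
      rwa [ENNReal.toReal_one] at this
    filter_upwards [Ioo_mem_nhdsLT_of_mem (show (1 : ℝ) ∈ Ioc (F M) 1 from ⟨hFM, le_refl 1⟩)]
      with u hu
    set B : Set Ω := {ω | u < F (X 0 ω)} with hB
    have hBsub : B ⊆ {ω | M < X 0 ω} := by
      intro ω hω
      by_contra hcon
      rw [mem_setOf_eq, not_lt] at hcon
      exact absurd hω (not_lt.mpr (le_trans (hFmono hcon) (le_of_lt hu.1)))
    have hlow : ∀ ω ∈ B, 1 - ε / 2 ≤ gfun ω := by
      intro ω hω
      have h1 : (m : ℝ) ≤ Y (q : ℤ) ω :=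
        le_trans (le_of_lt (hM _ (le_of_lt (hBsub hω)))) (hkey ω)
      have h2 : G (m : ℝ) ≤ G (Y (q : ℤ) ω) := hGmono h1
      have h3 : G (Y ((q : ℕ) : ℤ) ω) ≤ gfun ω := by
        simp only [hgfun]
        exact Finset.le_sup' (fun i : ℕ => G (Y (i : ℤ) ω)) (Finset.self_mem_range_succ q)
      linarith
    have hd : 0 < (μ B).toReal :=
      ENNReal.toReal_pos (hBpos u hu.2).ne' (measure_ne_top μ _)
    have hint : Integrable gfun μ := by
      refine Integrable.mono' (integrable_const 1) hgmeas.aestronglyMeasurable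
        (ae_of_all _ fun ω => ?_)
      rw [Real.norm_eq_abs, abs_le]
      exact ⟨by linarith [hg_nonneg ω], hg_le1 ω⟩
    have h1 : (1 - ε / 2) * (μ B).toReal ≤ ∫ ω in B, gfun ω ∂μ :=
      setIntegral_ge_of_const_le_real (hBmeas u) (measure_ne_top μ B) hlow hint.integrableOn
    have h2 : (∫ ω in B, gfun ω ∂μ) ≤ (μ B).toReal := by
      have := setIntegral_mono_on hint.integrableOn
        (integrableOn_const (measure_ne_top μ B)) (hBmeas u)
        (fun ω _ => hg_le1 ω)
      rwa [setIntegral_const, smul_eq_mul, mul_one, measureReal_def] at this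
    have hv1 : 1 - ε / 2 ≤ condE μ B gfun := by
      rw [condE, le_div_iff₀ hd]
      exact h1
    have hv2 : condE μ B gfun ≤ 1 := by
      rw [condE, div_le_one hd]
      exact h2
    have : condE μ B gfun = condE μ {ω | u < cdfR μ (X 0) (X 0 ω)}
        (fun ω => Finset.sup' (Finset.range (q + 1)) Finset.nonempty_range_add_one
          (fun i => cdfR μ (Y 0) (Y (i : ℤ) ω))) := rfl
    rw [← this, Real.dist_eq, abs_lt]
    constructor <;> linarith
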